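/- Let d ≥ 1, α ∈ (0,2) and ℓ ∈ (0, 1/√2]. There exists a constant C > 0, depending only on d, α and ℓ, such that for all x ∈ ℝ^d: ∫_{|z|≥ℓ} log(1 + |z|/(1+|x|)) |z|^{−d−α} dz ≤ C (1+|x|)^{−min(α,1)} (1 + 1_{α=1} · log(1+|x|)), where 1_{α=1} equals 1 if α = 1 and 0 otherwise. -/

import Mathlib

open MeasureTheory
open scoped ENNReal

noncomputable section

open Set Metric Module in
lemma lintegral_fun_norm_addHaar' {E : Type*} [NormedAddCommGroup E] [NormedSpace ℝ E]
    [MeasurableSpace E] [BorelSpace E] [Nontrivial E] (μ : Measure E)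
    [FiniteDimensional ℝ E] [μ.IsAddHaarMeasure] (F : ℝ → ℝ≥0∞) (hF : Measurable F) :
    ∫⁻ x, F ‖x‖ ∂μ = (finrank ℝ E) * μ (ball 0 1) *
      ∫⁻ y in Ioi (0:ℝ), ENNReal.ofReal (y ^ (finrank ℝ E - 1)) * F y := by
  calc
    ∫⁻ x, F ‖x‖ ∂μ = ∫⁻ x : ({(0)}ᶜ : Set E), F ‖x.1‖ ∂(μ.comap (↑)) := by
      rw [lintegral_subtype_comap (measurableSet_singleton _).compl fun x ↦ F ‖x‖,
        MeasureTheory.restrict_compl_singleton]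
    _ = ∫⁻ p : sphere (0 : E) 1 × Ioi (0 : ℝ), F p.2
          ∂μ.toSphere.prod (.volumeIoiPow (finrank ℝ E - 1)) :=
      (by simpa only [Function.comp_def, homeomorphUnitSphereProd_apply_snd_coe] using
        (μ.measurePreserving_homeomorphUnitSphereProd.lintegral_comp
          (hF.comp (measurable_subtype_coe.comp measurable_snd))))
    _ = μ.toSphere univ * ∫⁻ r : Ioi (0:ℝ), F r ∂(.volumeIoiPow (finrank ℝ E - 1)) := by
      have := MeasureTheory.lintegral_prod (μ := μ.toSphere)
        (ν := Measure.volumeIoiPow (finrank ℝ E - 1))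
        (fun p : ↑(sphere (0:E) 1) × ↑(Ioi (0:ℝ)) => F p.2)
        ((hF.comp (measurable_subtype_coe.comp measurable_snd)).aemeasurable)
      rw [this]
      simp [lintegral_const, mul_comm]
    _ = _ := by
      have hwd := lintegral_withDensity_eq_lintegral_mul
        (Measure.comap Subtype.val (volume : Measure ℝ))
        (f := fun r : Ioi (0:ℝ) => ENNReal.ofReal (r.1 ^ (finrank ℝ E - 1)))
        (ENNReal.measurable_ofReal.comp (measurable_subtype_coe.pow_const _))
        (g := fun r : Ioi (0:ℝ) => F r.1) (hF.comp measurable_subtype_coe)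
      rw [Measure.toSphere_apply_univ, Measure.volumeIoiPow, hwd]
      have hsc := lintegral_subtype_comap (μ := (volume : Measure ℝ))
        (s := Ioi (0:ℝ)) measurableSet_Ioi
        (fun y => ENNReal.ofReal (y ^ (finrank ℝ E - 1)) * F y)
      simp only [Pi.mul_apply] at *
      rw [hsc, mul_assoc]

lemma measurable_rpow_const' (c : ℝ) : Measurable (fun x : ℝ => x ^ c) :=
  measurable_of_continuousOn_compl_singleton 0 (fun x hx =>
    (Real.continuousAt_rpow_const x c (Or.inl hx)).continuousWithinAt)

/-- `log (1 + t) ≤ (1 + 2/α) t^(α/2)` for `t > 1`. -/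
lemma log_le_K_rpow {α t : ℝ} (hα : 0 < α) (ht : 1 < t) :
    Real.log (1 + t) ≤ (1 + 2/α) * t ^ (α/2) := by
  have ht0 : (0:ℝ) < t := by linarith
  have h1 : Real.log (1 + t) ≤ Real.log (2 * t) :=
    Real.log_le_log (by linarith) (by linarith)
  have h2 : Real.log (2 * t) = Real.log 2 + Real.log t :=
    Real.log_mul two_ne_zero ht0.ne'
  have h3 : Real.log 2 ≤ 1 := by
    have := Real.log_le_sub_one_of_pos (show (0:ℝ) < 2 by norm_num); linarith
  have h4 : Real.log (t ^ (α/2)) = (α/2) * Real.log t := Real.log_rpow ht0 _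
  have h5 : Real.log (t ^ (α/2)) ≤ t ^ (α/2) - 1 :=
    Real.log_le_sub_one_of_pos (Real.rpow_pos_of_pos ht0 _)
  have h7 : (1:ℝ) ≤ t ^ (α/2) := Real.one_le_rpow ht.le (by positivity)
  have h6 : Real.log t ≤ (2/α) * t ^ (α/2) := by
    have hh : (α/2) * Real.log t ≤ t ^ (α/2) := by linarith
    calc Real.log t = (2/α) * ((α/2) * Real.log t) := by field_simp
      _ ≤ (2/α) * t ^ (α/2) := by
          apply mul_le_mul_of_nonneg_left hh (by positivity)
  calc Real.log (1 + t) ≤ Real.log 2 + Real.log t := by linarith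
    _ ≤ 1 * t ^ (α/2) + (2/α) * t ^ (α/2) := by
        have := h6; nlinarith
    _ = (1 + 2/α) * t ^ (α/2) := by ring

theorem stable_log_tail_integral_bound (d : ℕ) (hd : 1 ≤ d) (α ℓ : ℝ)
    (hα : 0 < α) (hα' : α < 2) (hℓ : 0 < ℓ) (hℓ' : ℓ ≤ 1 / Real.sqrt 2) :
    ∃ C : ℝ, 0 < C ∧ ∀ x : EuclideanSpace ℝ (Fin d),
      (∫⁻ z in {z : EuclideanSpace ℝ (Fin d) | ℓ ≤ ‖z‖},
          ENNReal.ofReal (Real.log (1 + ‖z‖ / (1 + ‖x‖)) * ‖z‖ ^ (-(d : ℝ) - α)) ∂volume)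
        ≤ ENNReal.ofReal (C * (1 + ‖x‖) ^ (-(min α 1)) *
            (1 + (if α = 1 then Real.log (1 + ‖x‖) else 0))) := by
  classical
  have hsqrt2 : (1:ℝ) ≤ Real.sqrt 2 := by
    nlinarith [Real.sq_sqrt (show (0:ℝ) ≤ 2 by norm_num), Real.sqrt_nonneg 2]
  have hℓ1 : ℓ ≤ 1 := hℓ'.trans (by
    rw [div_le_one (by linarith)]; exact hsqrt2)
  haveI : Nontrivial (EuclideanSpace ℝ (Fin d)) := by
    have hfr : Module.finrank ℝ (EuclideanSpace ℝ (Fin d)) = d := finrank_euclideanSpace_fin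
    exact Module.nontrivial_of_finrank_pos (by omega : 0 < Module.finrank ℝ
      (EuclideanSpace ℝ (Fin d)))
  set V : ℝ≥0∞ := volume (Metric.ball (0 : EuclideanSpace ℝ (Fin d)) 1) with hV
  set N : ℝ≥0∞ := (d : ℝ≥0∞) * V with hN
  have hNtop : N ≠ ⊤ :=
    ENNReal.mul_ne_top (ENNReal.natCast_ne_top d) measure_ball_lt_top.ne
  have hN0 : (0:ℝ) ≤ N.toReal := ENNReal.toReal_nonneg
  set K : ℝ := 1 + 2/α with hK
  have hK0 : (0:ℝ) < K := by positivity
  -- The key estimate, uniform in `x`: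
  have key : ∀ x : EuclideanSpace ℝ (Fin d),
      (∫⁻ z in {z : EuclideanSpace ℝ (Fin d) | ℓ ≤ ‖z‖},
          ENNReal.ofReal (Real.log (1 + ‖z‖ / (1 + ‖x‖)) * ‖z‖ ^ (-(d : ℝ) - α)) ∂volume)
        ≤ ENNReal.ofReal (N.toReal * ((1 + ‖x‖)⁻¹ *
            (∫ y in ℓ..(1 + ‖x‖), y ^ (-α)) + (2*K/α) * (1 + ‖x‖) ^ (-α))) := by
    intro x
    set R : ℝ := 1 + ‖x‖ with hR
    have hR1 : (1:ℝ) ≤ R := le_add_of_nonneg_right (norm_nonneg x)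
    have hR0 : (0:ℝ) < R := by linarith
    have hℓR : ℓ ≤ R := hℓ1.trans hR1
    set F : ℝ → ℝ≥0∞ := fun r =>
      (Set.Icc ℓ R).indicator (fun r => ENNReal.ofReal (R⁻¹ * r ^ (1 - (d:ℝ) - α))) r
        + (Set.Ioi R).indicator (fun r => ENNReal.ofReal (K * R ^ (-(α/2)) * r ^ (-(d:ℝ) - α/2))) r
      with hF
    have hFmeas : Measurable F := by
      apply Measurable.add
      · exact (ENNReal.measurable_ofReal.comp
          (measurable_const.mul (measurable_rpow_const' _))).indicator measurableSet_Icc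
      · exact (ENNReal.measurable_ofReal.comp
          (measurable_const.mul (measurable_rpow_const' _))).indicator measurableSet_Ioi
    have hS : MeasurableSet {z : EuclideanSpace ℝ (Fin d) | ℓ ≤ ‖z‖} :=
      (isClosed_le continuous_const continuous_norm).measurableSet
    -- Step 1: pointwise domination
    have step1 : (∫⁻ z in {z : EuclideanSpace ℝ (Fin d) | ℓ ≤ ‖z‖},
          ENNReal.ofReal (Real.log (1 + ‖z‖ / R) * ‖z‖ ^ (-(d : ℝ) - α)) ∂volume)
        ≤ ∫⁻ z : EuclideanSpace ℝ (Fin d), F ‖z‖ ∂volume := by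
      rw [← lintegral_indicator hS]
      refine lintegral_mono fun z => ?_
      by_cases hz : z ∈ {z : EuclideanSpace ℝ (Fin d) | ℓ ≤ ‖z‖}
      · rw [Set.indicator_of_mem hz]
        have hzℓ : ℓ ≤ ‖z‖ := hz
        have hr0 : (0:ℝ) < ‖z‖ := lt_of_lt_of_le hℓ hzℓ
        rcases le_or_gt ‖z‖ R with hcase | hcase
        · have hmem : ‖z‖ ∈ Set.Icc ℓ R := ⟨hzℓ, hcase⟩
          have hFr : ENNReal.ofReal (R⁻¹ * ‖z‖ ^ (1 - (d:ℝ) - α)) ≤ F ‖z‖ := by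
            rw [hF]; simp only
            rw [Set.indicator_of_mem hmem]
            exact self_le_add_right _ _
          refine le_trans (ENNReal.ofReal_le_ofReal ?_) hFr
          have hlog : Real.log (1 + ‖z‖ / R) ≤ ‖z‖ / R := by
            have := Real.log_le_sub_one_of_pos (show (0:ℝ) < 1 + ‖z‖ / R by positivity)
            linarith
          have h2 : ‖z‖ ^ (1 - (d:ℝ) - α) = ‖z‖ * ‖z‖ ^ (-(d:ℝ) - α) := by
            rw [show (1 - (d:ℝ) - α) = 1 + (-(d:ℝ) - α) by ring, Real.rpow_add hr0,
              Real.rpow_one]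
          rw [h2]
          calc Real.log (1 + ‖z‖/R) * ‖z‖ ^ (-(d:ℝ)-α)
              ≤ (‖z‖/R) * ‖z‖ ^ (-(d:ℝ)-α) :=
                mul_le_mul_of_nonneg_right hlog (Real.rpow_nonneg (norm_nonneg z) _)
            _ = R⁻¹ * (‖z‖ * ‖z‖ ^ (-(d:ℝ)-α)) := by ring
        · have hmem : ‖z‖ ∈ Set.Ioi R := hcase
          have hFr : ENNReal.ofReal (K * R ^ (-(α/2)) * ‖z‖ ^ (-(d:ℝ) - α/2)) ≤ F ‖z‖ := by
            rw [hF]; simp only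
            rw [Set.indicator_of_mem hmem]
            exact self_le_add_left _ _
          refine le_trans (ENNReal.ofReal_le_ofReal ?_) hFr
          have ht : 1 < ‖z‖ / R := (one_lt_div hR0).mpr hcase
          have hlog : Real.log (1 + ‖z‖ / R) ≤ K * (‖z‖/R) ^ (α/2) := by
            rw [hK]; exact log_le_K_rpow hα ht
          have hrw : K * (‖z‖/R) ^ (α/2) * ‖z‖ ^ (-(d:ℝ)-α)
              = K * R ^ (-(α/2)) * ‖z‖ ^ (-(d:ℝ)-α/2) := by
            rw [Real.div_rpow hr0.le hR0.le, Real.rpow_neg hR0.le,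
              show (-(d:ℝ) - α/2) = (α/2) + (-(d:ℝ) - α) by ring, Real.rpow_add hr0]
            ring
          calc Real.log (1 + ‖z‖/R) * ‖z‖ ^ (-(d:ℝ)-α)
              ≤ (K * (‖z‖/R) ^ (α/2)) * ‖z‖ ^ (-(d:ℝ)-α) :=
                mul_le_mul_of_nonneg_right hlog (Real.rpow_nonneg (norm_nonneg z) _)
            _ = _ := hrw
      · rw [Set.indicator_of_notMem hz]; exact bot_le
    -- Step 2: polar coordinates
    have step2 : ∫⁻ z : EuclideanSpace ℝ (Fin d), F ‖z‖ ∂volume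
        = N * ∫⁻ y in Set.Ioi (0:ℝ), ENNReal.ofReal (y ^ (d - 1)) * F y ∂volume := by
      rw [lintegral_fun_norm_addHaar' volume F hFmeas]
      rw [finrank_euclideanSpace_fin]
    set I : ℝ := ∫ y in ℓ..R, y ^ (-α) with hIdef
    have hInn : 0 ≤ I :=
      intervalIntegral.integral_nonneg hℓR fun y hy => Real.rpow_nonneg (hℓ.le.trans hy.1) _
    have hsub1 : Set.Icc ℓ R ⊆ Set.Ioi (0:ℝ) := fun y hy => lt_of_lt_of_le hℓ hy.1
    have hsub2 : Set.Ioi R ⊆ Set.Ioi (0:ℝ) := fun y hy => lt_trans hR0 hy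
    -- Piece 1
    have piece1 : ∫⁻ y in Set.Ioi (0:ℝ), ENNReal.ofReal (y ^ (d-1)) *
        (Set.Icc ℓ R).indicator (fun r => ENNReal.ofReal (R⁻¹ * r ^ (1 - (d:ℝ) - α))) y ∂volume
        = ENNReal.ofReal (R⁻¹ * I) := by
      have heq : ∀ y : ℝ, ENNReal.ofReal (y ^ (d-1)) *
          (Set.Icc ℓ R).indicator (fun r => ENNReal.ofReal (R⁻¹ * r ^ (1 - (d:ℝ) - α))) y
          = (Set.Icc ℓ R).indicator (fun y => ENNReal.ofReal (y ^ (d-1)) *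
              ENNReal.ofReal (R⁻¹ * y ^ (1 - (d:ℝ) - α))) y := by
        intro y; by_cases hy : y ∈ Set.Icc ℓ R <;> simp [hy]
      simp only [heq]
      rw [← lintegral_indicator measurableSet_Ioi, Set.indicator_indicator,
        Set.inter_eq_right.mpr hsub1, lintegral_indicator measurableSet_Icc]
      have hcongr : ∫⁻ y in Set.Icc ℓ R, ENNReal.ofReal (y ^ (d-1)) *
          ENNReal.ofReal (R⁻¹ * y ^ (1 - (d:ℝ) - α)) ∂volume
          = ∫⁻ y in Set.Icc ℓ R, ENNReal.ofReal (R⁻¹ * y ^ (-α)) ∂volume := by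
        refine setLIntegral_congr_fun measurableSet_Icc ?_
        intro y hy
        dsimp only
        have hy0 : (0:ℝ) < y := lt_of_lt_of_le hℓ hy.1
        have hynz : y ^ ((d:ℝ) - 1) ≠ 0 := (Real.rpow_pos_of_pos hy0 _).ne'
        rw [← ENNReal.ofReal_mul (pow_nonneg hy0.le _)]
        congr 1
        have hnp : (y:ℝ) ^ (d-1) = y ^ ((d:ℝ) - 1) := by
          rw [← Real.rpow_natCast y (d-1), Nat.cast_sub hd, Nat.cast_one]
        rw [hnp, show (-α : ℝ) = ((d:ℝ) - 1) + (1 - (d:ℝ) - α) by ring, Real.rpow_add hy0]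
        ring
      rw [hcongr]
      have hint : IntegrableOn (fun y : ℝ => R⁻¹ * y ^ (-α)) (Set.Icc ℓ R) := by
        apply ContinuousOn.integrableOn_compact isCompact_Icc
        exact continuousOn_const.mul fun y hy =>
          (Real.continuousAt_rpow_const y (-α)
            (Or.inl (lt_of_lt_of_le hℓ hy.1).ne')).continuousWithinAt
      rw [← MeasureTheory.ofReal_integral_eq_lintegral_ofReal hint ?_]
      · congr 1
        rw [MeasureTheory.integral_Icc_eq_integral_Ioc, ← intervalIntegral.integral_of_le hℓR,
          intervalIntegral.integral_const_mul]
      · filter_upwards [ae_restrict_mem measurableSet_Icc] with y hy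
        exact mul_nonneg (inv_nonneg.mpr hR0.le)
          (Real.rpow_nonneg (lt_of_lt_of_le hℓ hy.1).le _)
    -- Piece 2
    set v : ℝ := ∫ y in Set.Ioi R, y ^ (-1 - α/2) with hvdef
    have hv : v = (2/α) * R ^ (-(α/2)) := by
      rw [hvdef, integral_Ioi_rpow_of_lt (by linarith) hR0,
        show (-1 - α/2 + 1 : ℝ) = -(α/2) by ring]
      field_simp
    have piece2 : ∫⁻ y in Set.Ioi (0:ℝ), ENNReal.ofReal (y ^ (d-1)) *
        (Set.Ioi R).indicator (fun r => ENNReal.ofReal (K * R ^ (-(α/2)) * r ^ (-(d:ℝ) - α/2))) y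
          ∂volume
        = ENNReal.ofReal ((K * R ^ (-(α/2))) * v) := by
      have heq : ∀ y : ℝ, ENNReal.ofReal (y ^ (d-1)) *
          (Set.Ioi R).indicator (fun r => ENNReal.ofReal (K * R ^ (-(α/2)) * r ^ (-(d:ℝ) - α/2))) y
          = (Set.Ioi R).indicator (fun y => ENNReal.ofReal (y ^ (d-1)) *
              ENNReal.ofReal (K * R ^ (-(α/2)) * y ^ (-(d:ℝ) - α/2))) y := by
        intro y; by_cases hy : y ∈ Set.Ioi R <;> simp [hy]
      simp only [heq]
      rw [← lintegral_indicator measurableSet_Ioi, Set.indicator_indicator,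
        Set.inter_eq_right.mpr hsub2, lintegral_indicator measurableSet_Ioi]
      have hcongr : ∫⁻ y in Set.Ioi R, ENNReal.ofReal (y ^ (d-1)) *
          ENNReal.ofReal (K * R ^ (-(α/2)) * y ^ (-(d:ℝ) - α/2)) ∂volume
          = ∫⁻ y in Set.Ioi R, ENNReal.ofReal ((K * R ^ (-(α/2))) * y ^ (-1 - α/2)) ∂volume := by
        refine setLIntegral_congr_fun measurableSet_Ioi ?_
        intro y hy
        dsimp only
        have hy0 : (0:ℝ) < y := lt_trans hR0 hy
        have hynz : y ^ ((d:ℝ) - 1) ≠ 0 := (Real.rpow_pos_of_pos hy0 _).ne'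
        rw [← ENNReal.ofReal_mul (pow_nonneg hy0.le _)]
        congr 1
        have hnp : (y:ℝ) ^ (d-1) = y ^ ((d:ℝ) - 1) := by
          rw [← Real.rpow_natCast y (d-1), Nat.cast_sub hd, Nat.cast_one]
        rw [hnp, show (-1 - α/2 : ℝ) = ((d:ℝ) - 1) + (-(d:ℝ) - α/2) by ring, Real.rpow_add hy0]
        ring
      rw [hcongr]
      have hint : IntegrableOn (fun y : ℝ => (K * R ^ (-(α/2))) * y ^ (-1 - α/2)) (Set.Ioi R) :=
        (integrableOn_Ioi_rpow_of_lt (by linarith) hR0).const_mul _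
      rw [← MeasureTheory.ofReal_integral_eq_lintegral_ofReal hint ?_]
      · rw [MeasureTheory.integral_const_mul]
      · filter_upwards [ae_restrict_mem measurableSet_Ioi] with y hy
        exact mul_nonneg (by positivity) (Real.rpow_nonneg (lt_trans hR0 hy).le _)
    -- Step 3: combine the two pieces
    have step3 : ∫⁻ y in Set.Ioi (0:ℝ), ENNReal.ofReal (y ^ (d-1)) * F y ∂volume
        = ENNReal.ofReal (R⁻¹ * I) + ENNReal.ofReal ((K * R ^ (-(α/2))) * v) := by
      rw [hF]
      simp only [mul_add]
      have hm : Measurable (fun y : ℝ => ENNReal.ofReal (y ^ (d-1)) *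
          (Set.Icc ℓ R).indicator (fun r => ENNReal.ofReal (R⁻¹ * r ^ (1 - (d:ℝ) - α))) y) := by
        apply Measurable.mul
        · exact (measurable_id.pow_const _).ennreal_ofReal
        · exact (ENNReal.measurable_ofReal.comp
            (measurable_const.mul (measurable_rpow_const' _))).indicator measurableSet_Icc
      rw [lintegral_add_left hm, piece1, piece2]
    have hval : (K * R ^ (-(α/2))) * v = (2*K/α) * R ^ (-α) := by
      rw [hv, show (-α : ℝ) = (-(α/2)) + (-(α/2)) by ring, Real.rpow_add hR0]
      ring
    have hnn2 : (0:ℝ) ≤ (2*K/α) * R ^ (-α) := by positivity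
    calc (∫⁻ z in {z : EuclideanSpace ℝ (Fin d) | ℓ ≤ ‖z‖},
          ENNReal.ofReal (Real.log (1 + ‖z‖ / R) * ‖z‖ ^ (-(d : ℝ) - α)) ∂volume)
        ≤ ∫⁻ z : EuclideanSpace ℝ (Fin d), F ‖z‖ ∂volume := step1
      _ = N * ∫⁻ y in Set.Ioi (0:ℝ), ENNReal.ofReal (y ^ (d - 1)) * F y ∂volume := step2
      _ = N * (ENNReal.ofReal (R⁻¹ * I) + ENNReal.ofReal ((2*K/α) * R ^ (-α))) := by
          rw [step3, hval]
      _ = N * ENNReal.ofReal (R⁻¹ * I + (2*K/α) * R ^ (-α)) := by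
          rw [ENNReal.ofReal_add (mul_nonneg (inv_nonneg.mpr hR0.le) hInn) hnn2]
      _ = ENNReal.ofReal (N.toReal * (R⁻¹ * I + (2*K/α) * R ^ (-α))) := by
          rw [ENNReal.ofReal_mul ENNReal.toReal_nonneg, ENNReal.ofReal_toReal hNtop]
  rcases lt_trichotomy α 1 with hα1 | hα1 | hα1
  · -- Case α < 1
    have h1α : (0:ℝ) < 1 - α := by linarith
    refine ⟨N.toReal * (1/(1-α) + 2*K/α) + 1, ?_, fun x => ?_⟩
    · have h1 : (0:ℝ) < 1/(1-α) := by positivity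
      have h2 : (0:ℝ) < 2*K/α := by positivity
      have : 0 ≤ N.toReal * (1/(1-α) + 2*K/α) := mul_nonneg hN0 (by linarith)
      linarith
    refine (key x).trans (ENNReal.ofReal_le_ofReal ?_)
    set R : ℝ := 1 + ‖x‖ with hRdef
    have hR1 : (1:ℝ) ≤ R := le_add_of_nonneg_right (norm_nonneg x)
    have hR0 : (0:ℝ) < R := by linarith
    have hℓR : ℓ ≤ R := hℓ1.trans hR1
    rw [min_eq_left hα1.le, if_neg hα1.ne]
    have hIval : (∫ y in ℓ..R, y ^ (-α)) = (R ^ (1-α) - ℓ ^ (1-α)) / (1-α) := by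
      rw [integral_rpow (Or.inl (by linarith)),
        show (-α + 1 : ℝ) = 1 - α by ring]
    rw [hIval]
    have hRα : R⁻¹ * R ^ (1-α) = R ^ (-α) := by
      rw [show (-α:ℝ) = (-1) + (1-α) by ring, Real.rpow_add hR0, Real.rpow_neg_one]
    have hl0 : (0:ℝ) ≤ ℓ ^ (1-α) := Real.rpow_nonneg hℓ.le _
    have hRa0 : (0:ℝ) ≤ R ^ (-α) := Real.rpow_nonneg hR0.le _
    have hbound : R⁻¹ * ((R ^ (1-α) - ℓ ^ (1-α)) / (1-α)) ≤ (1/(1-α)) * R ^ (-α) := by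
      have h' : (R ^ (1-α) - ℓ ^ (1-α)) / (1-α) ≤ R ^ (1-α) / (1-α) :=
        (div_le_div_iff_of_pos_right h1α).mpr (by linarith)
      calc R⁻¹ * ((R ^ (1-α) - ℓ ^ (1-α)) / (1-α)) ≤ R⁻¹ * (R ^ (1-α) / (1-α)) :=
            mul_le_mul_of_nonneg_left h' (inv_nonneg.mpr hR0.le)
        _ = (1/(1-α)) * (R⁻¹ * R ^ (1-α)) := by ring
        _ = (1/(1-α)) * R ^ (-α) := by rw [hRα]
    calc N.toReal * (R⁻¹ * ((R ^ (1-α) - ℓ ^ (1-α)) / (1-α)) + 2*K/α * R ^ (-α))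
        ≤ N.toReal * ((1/(1-α)) * R ^ (-α) + (2*K/α) * R ^ (-α)) := by
          apply mul_le_mul_of_nonneg_left _ hN0; linarith
      _ = (N.toReal * (1/(1-α) + 2*K/α)) * R ^ (-α) := by ring
      _ ≤ (N.toReal * (1/(1-α) + 2*K/α) + 1) * R ^ (-α) * (1 + 0) := by nlinarith
  · -- Case α = 1
    subst hα1
    have hL : 0 ≤ -Real.log ℓ := by
      have := Real.log_nonpos hℓ.le hℓ1; linarith
    refine ⟨N.toReal * ((1 + -Real.log ℓ) + 2*K) + 1, ?_, fun x => ?_⟩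
    · have : 0 ≤ N.toReal * ((1 + -Real.log ℓ) + 2*K) :=
        mul_nonneg hN0 (by linarith)
      linarith
    refine (key x).trans (ENNReal.ofReal_le_ofReal ?_)
    set R : ℝ := 1 + ‖x‖ with hRdef
    have hR1 : (1:ℝ) ≤ R := le_add_of_nonneg_right (norm_nonneg x)
    have hR0 : (0:ℝ) < R := by linarith
    have hℓR : ℓ ≤ R := hℓ1.trans hR1
    rw [min_self, if_pos rfl]
    have h0m : (0:ℝ) ∉ Set.uIcc ℓ R := by
      rw [Set.uIcc_of_le hℓR]; rintro ⟨h1, h2⟩; exact absurd h1 (not_le.mpr hℓ)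
    have hIval : (∫ y in ℓ..R, y ^ (-1:ℝ)) = Real.log R - Real.log ℓ := by
      rw [intervalIntegral.integral_congr (g := fun y => y⁻¹)
          (fun y _ => Real.rpow_neg_one y),
        integral_inv h0m, Real.log_div (by linarith) hℓ.ne']
    rw [hIval, Real.rpow_neg_one]
    have hlogR : 0 ≤ Real.log R := Real.log_nonneg hR1
    have hRi : 0 ≤ R⁻¹ := inv_nonneg.mpr hR0.le
    nlinarith [mul_nonneg (mul_nonneg hN0 hRi) (mul_nonneg hL hlogR),
      mul_nonneg (mul_nonneg hN0 hRi) (mul_nonneg hK0.le hlogR),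
      mul_nonneg hRi hlogR, mul_nonneg (mul_nonneg hN0 hRi) hlogR,
      mul_nonneg hN0 hRi]
  · -- Case α > 1
    have hα1' : (0:ℝ) < α - 1 := by linarith
    refine ⟨N.toReal * (ℓ ^ (1-α)/(α-1) + 2*K/α) + 1, ?_, fun x => ?_⟩
    · have h1 : (0:ℝ) < ℓ ^ (1-α)/(α-1) :=
        div_pos (Real.rpow_pos_of_pos hℓ _) hα1'
      have h2 : (0:ℝ) < 2*K/α := by positivity
      have : 0 ≤ N.toReal * (ℓ ^ (1-α)/(α-1) + 2*K/α) := mul_nonneg hN0 (by linarith)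
      linarith
    refine (key x).trans (ENNReal.ofReal_le_ofReal ?_)
    set R : ℝ := 1 + ‖x‖ with hRdef
    have hR1 : (1:ℝ) ≤ R := le_add_of_nonneg_right (norm_nonneg x)
    have hR0 : (0:ℝ) < R := by linarith
    have hℓR : ℓ ≤ R := hℓ1.trans hR1
    rw [min_eq_right hα1.le, if_neg hα1.ne']
    have h0m : (0:ℝ) ∉ Set.uIcc ℓ R := by
      rw [Set.uIcc_of_le hℓR]; rintro ⟨h1, h2⟩; exact absurd h1 (not_le.mpr hℓ)
    have hIval : (∫ y in ℓ..R, y ^ (-α)) = (ℓ ^ (1-α) - R ^ (1-α)) / (α-1) := by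
      rw [integral_rpow
          (Or.inr ⟨(show (-α:ℝ) ≠ -1 by intro h; exact hα1.ne' (by linarith)), h0m⟩),
        show (-α + 1 : ℝ) = 1 - α by ring]
      rw [div_eq_div_iff (by linarith) (by linarith : (0:ℝ) < α - 1).ne']
      ring
    rw [hIval]
    have hR1α : (0:ℝ) ≤ R ^ (1-α) := Real.rpow_nonneg hR0.le _
    have hmid : R⁻¹ * ((ℓ ^ (1-α) - R ^ (1-α)) / (α-1)) ≤ (ℓ ^ (1-α)/(α-1)) * R⁻¹ := by
      have h' : (ℓ ^ (1-α) - R ^ (1-α)) / (α-1) ≤ ℓ ^ (1-α) / (α-1) :=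
        (div_le_div_iff_of_pos_right hα1').mpr (by linarith)
      calc R⁻¹ * ((ℓ ^ (1-α) - R ^ (1-α)) / (α-1)) ≤ R⁻¹ * (ℓ ^ (1-α) / (α-1)) :=
            mul_le_mul_of_nonneg_left h' (inv_nonneg.mpr hR0.le)
        _ = (ℓ ^ (1-α)/(α-1)) * R⁻¹ := by ring
    have htail : (2*K/α) * R ^ (-α) ≤ (2*K/α) * R⁻¹ := by
      have h' := Real.rpow_le_rpow_of_exponent_le hR1 (by linarith : -α ≤ -1)
      rw [Real.rpow_neg_one] at h'
      exact mul_le_mul_of_nonneg_left h' (by positivity)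
    rw [Real.rpow_neg_one]
    calc N.toReal * (R⁻¹ * ((ℓ ^ (1-α) - R ^ (1-α)) / (α-1)) + 2*K/α * R ^ (-α))
        ≤ N.toReal * ((ℓ ^ (1-α)/(α-1)) * R⁻¹ + (2*K/α) * R⁻¹) :=
          mul_le_mul_of_nonneg_left (add_le_add hmid htail) hN0
      _ = (N.toReal * (ℓ ^ (1-α)/(α-1) + 2*K/α)) * R⁻¹ := by ring
      _ ≤ (N.toReal * (ℓ ^ (1-α)/(α-1) + 2*K/α) + 1) * R⁻¹ * (1 + 0) := by
          nlinarith [inv_nonneg.mpr hR0.le]
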